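/- Let I be a real-valued function on real populations that is scale-invariant (I(tP) = I(P) for every real t > 0 and every real population P), and let J be a real-valued function on real populations that is additive and positively homogeneous (J(P + Q) = J(P) + J(Q) and J(tP) = tJ(P) for t > 0). Let D be a real population with |D| = 1, and assume that for every real population Q, (I(D + tQ) − I(D))/t → J(Q) as t → 0⁺. Let Z₀ be a population with Z₀ = |Z₀|·D. Define V(X) = Tot(X) − I(X)·|X| on populations, and define f(w) = w − J(1_w) − I(D), where 1_w is the population with a single welfare subject at level w. Then for all populations X and Y with Σ_w X(w)·f(w) > Σ_w Y(w)·f(w), there exists N ∈ ℕ such that V(X + n·Z₀) > V(Y + n·Z₀) for every integer n ≥ N. -/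

import Mathlib

/-- The size of a population: total number of welfare subjects. -/
noncomputable def psize (X : ℝ →₀ ℕ) : ℕ := X.sum fun _ n => n

/-- Total welfare of a population. -/
noncomputable def ptot (X : ℝ →₀ ℕ) : ℝ := X.sum fun w n => (n : ℝ) * w

/-- Average welfare of a population. -/
noncomputable def pavg (X : ℝ →₀ ℕ) : ℝ := ptot X / (psize X : ℝ)

/-- A real population: finitely supported, nonzero, with non-negative real values. -/
def IsRealPop (P : ℝ →₀ ℝ) : Prop := P ≠ 0 ∧ ∀ w, 0 ≤ P w

/-- View an (integer) population as a real population. -/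
noncomputable def toRealPop (X : ℝ →₀ ℕ) : ℝ →₀ ℝ :=
  Finsupp.mapRange (fun n : ℕ => (n : ℝ)) (by simp) X

/-- Size of a real population. -/
noncomputable def rsize (P : ℝ →₀ ℝ) : ℝ := P.sum fun _ x => x

/-- Total welfare of a real population. -/
noncomputable def rtot (P : ℝ →₀ ℝ) : ℝ := P.sum fun w x => x * w

/-- Average welfare of a real population. -/
noncomputable def ravg (P : ℝ →₀ ℝ) : ℝ := rtot P / rsize P

lemma toRealPop_apply (X : ℝ →₀ ℕ) (w : ℝ) : toRealPop X w = (X w : ℝ) := by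
  simp [toRealPop]

lemma isRealPop_toReal (X : ℝ →₀ ℕ) (hX : X ≠ 0) : IsRealPop (toRealPop X) := by
  constructor
  · obtain ⟨w, hw⟩ := Finsupp.ne_iff.1 hX
    exact Finsupp.ne_iff.2 ⟨w, by simp [toRealPop_apply]; exact_mod_cast hw⟩
  · intro w; simp [toRealPop_apply]

lemma rsize_toReal (X : ℝ →₀ ℕ) : rsize (toRealPop X) = (psize X : ℝ) := by
  rw [rsize, toRealPop, Finsupp.sum_mapRange_index (by simp)]
  rw [psize, Finsupp.sum, Finsupp.sum, Nat.cast_sum]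

lemma rtot_toReal (X : ℝ →₀ ℕ) : rtot (toRealPop X) = ptot X := by
  rw [rtot, toRealPop, Finsupp.sum_mapRange_index (by simp)]
  rfl

lemma rsize_add (P Q : ℝ →₀ ℝ) : rsize (P + Q) = rsize P + rsize Q := by
  exact Finsupp.sum_add_index' (by simp) (by intros; rfl)

lemma rtot_add (P Q : ℝ →₀ ℝ) : rtot (P + Q) = rtot P + rtot Q := by
  exact Finsupp.sum_add_index' (by simp) (by intros; ring)

lemma rsize_smul (a : ℝ) (P : ℝ →₀ ℝ) : rsize (a • P) = a * rsize P := by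
  rw [rsize, Finsupp.sum_smul_index (by simp), rsize, Finsupp.mul_sum]

lemma rtot_smul (a : ℝ) (P : ℝ →₀ ℝ) : rtot (a • P) = a * rtot P := by
  rw [rtot, Finsupp.sum_smul_index (by simp), rtot, Finsupp.mul_sum]
  simp [mul_assoc]

lemma toRealPop_add (X Z : ℝ →₀ ℕ) : toRealPop (X + Z) = toRealPop X + toRealPop Z := by
  ext w; simp [toRealPop_apply]

lemma toRealPop_nsmul (n : ℕ) (Z : ℝ →₀ ℕ) : toRealPop (n • Z) = (n : ℝ) • toRealPop Z := by
  ext w; simp [toRealPop_apply]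

lemma toRealPop_single (a : ℝ) (b : ℕ) :
    toRealPop (Finsupp.single a b) = (b : ℝ) • Finsupp.single a (1 : ℝ) := by
  ext w; simp [toRealPop_apply, Finsupp.single_apply]

lemma isRealPop_single (a : ℝ) : IsRealPop (Finsupp.single a (1 : ℝ)) := by
  constructor
  · simp [Finsupp.single_eq_zero]
  · intro w; rw [Finsupp.single_apply]; split <;> norm_num

lemma rsize_ne_zero (P : ℝ →₀ ℝ) (h : rsize P ≠ 0) : P ≠ 0 := by
  intro h0; apply h; simp [h0, rsize]

lemma psize_pos (X : ℝ →₀ ℕ) (hX : X ≠ 0) : 0 < psize X := by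
  rcases Nat.eq_zero_or_pos (psize X) with h | h
  · exfalso
    apply hX
    ext w
    by_cases hw : w ∈ X.support
    · exact (Finset.sum_eq_zero_iff.1 h) w hw
    · simpa using (Finsupp.notMem_support_iff.1 hw)
  · exact h

lemma J_single (J : (ℝ →₀ ℝ) → ℝ)
    (hJhom : ∀ t : ℝ, t > 0 → ∀ P : ℝ →₀ ℝ, IsRealPop P → J (t • P) = t * J P)
    (a : ℝ) (b : ℕ) (hb : b ≠ 0) :
    J (toRealPop (Finsupp.single a b)) = (b : ℝ) * J (Finsupp.single a (1 : ℝ)) := by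
  rw [toRealPop_single, hJhom _ (by exact_mod_cast Nat.pos_of_ne_zero hb) _ (isRealPop_single a)]

lemma J_sum (J : (ℝ →₀ ℝ) → ℝ)
    (hJadd : ∀ P Q : ℝ →₀ ℝ, IsRealPop P → IsRealPop Q → J (P + Q) = J P + J Q)
    (hJhom : ∀ t : ℝ, t > 0 → ∀ P : ℝ →₀ ℝ, IsRealPop P → J (t • P) = t * J P)
    (X : ℝ →₀ ℕ) (hX : X ≠ 0) :
    J (toRealPop X) = X.sum fun w n => (n : ℝ) * J (Finsupp.single w (1 : ℝ)) := by
  induction X using Finsupp.induction with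
  | zero => exact absurd rfl hX
  | single_add a b g ha hb IH =>
    rw [Finsupp.sum_add_index' (by simp) (by intros; push_cast; ring),
      Finsupp.sum_single_index (by simp)]
    by_cases hg : g = 0
    · subst hg
      simp only [add_zero, Finsupp.sum_zero_index]
      exact J_single J hJhom a b hb
    · rw [toRealPop_add,
        hJadd _ _ (isRealPop_toReal _ (by simp [Finsupp.single_eq_zero, hb])) (isRealPop_toReal _ hg),
        J_single J hJhom a b hb, IH hg]

lemma fsum_eq (J : (ℝ →₀ ℝ) → ℝ)
    (hJadd : ∀ P Q : ℝ →₀ ℝ, IsRealPop P → IsRealPop Q → J (P + Q) = J P + J Q)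
    (hJhom : ∀ t : ℝ, t > 0 → ∀ P : ℝ →₀ ℝ, IsRealPop P → J (t • P) = t * J P)
    (c : ℝ) (f : ℝ → ℝ) (hf : ∀ w : ℝ, f w = w - J (Finsupp.single w (1 : ℝ)) - c)
    (X : ℝ →₀ ℕ) (hX : X ≠ 0) :
    X.sum (fun w n => (n : ℝ) * f w) = ptot X - c * (psize X : ℝ) - J (toRealPop X) := by
  rw [J_sum J hJadd hJhom X hX, ptot]
  have hps : (psize X : ℝ) = X.sum fun _ n => (n : ℝ) := by
    rw [psize, Finsupp.sum, Finsupp.sum, Nat.cast_sum]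
  rw [hps]
  simp only [Finsupp.sum, Finset.mul_sum, ← Finset.sum_sub_distrib]
  refine Finset.sum_congr rfl fun w _ => ?_
  rw [hf]; ring

theorem stmt_8 (I J : (ℝ →₀ ℝ) → ℝ)
    (hIscale : ∀ t : ℝ, t > 0 → ∀ P : ℝ →₀ ℝ, IsRealPop P → I (t • P) = I P)
    (hJadd : ∀ P Q : ℝ →₀ ℝ, IsRealPop P → IsRealPop Q → J (P + Q) = J P + J Q)
    (hJhom : ∀ t : ℝ, t > 0 → ∀ P : ℝ →₀ ℝ, IsRealPop P → J (t • P) = t * J P)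
    (D : ℝ →₀ ℝ) (hD : IsRealPop D) (hDsize : rsize D = 1)
    (hderiv : ∀ Q : ℝ →₀ ℝ, IsRealPop Q →
      Filter.Tendsto (fun t : ℝ => (I (D + t • Q) - I D) / t)
        (nhdsWithin 0 (Set.Ioi 0)) (nhds (J Q)))
    (Z₀ : ℝ →₀ ℕ) (hZ₀ : Z₀ ≠ 0) (hZ₀D : toRealPop Z₀ = (psize Z₀ : ℝ) • D)
    (V : (ℝ →₀ ℕ) → ℝ)
    (hV : ∀ X : ℝ →₀ ℕ, V X = ptot X - I (toRealPop X) * (psize X : ℝ))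
    (f : ℝ → ℝ)
    (hf : ∀ w : ℝ, f w = w - J (Finsupp.single w (1 : ℝ)) - I D)
    (X Y : ℝ →₀ ℕ) (hX : X ≠ 0) (hY : Y ≠ 0)
    (hfsum : X.sum (fun w n => (n : ℝ) * f w) > Y.sum (fun w n => (n : ℝ) * f w)) :
    ∃ N : ℕ, ∀ n : ℕ, n ≥ N → V (X + n • Z₀) > V (Y + n • Z₀) := by
  set QX := toRealPop X with hQXdef
  set QY := toRealPop Y with hQYdef
  have hQX : IsRealPop QX := isRealPop_toReal X hX
  have hQY : IsRealPop QY := isRealPop_toReal Y hY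
  set c : ℝ := (psize Z₀ : ℝ) with hcdef
  have hc : 0 < c := by rw [hcdef]; exact_mod_cast psize_pos Z₀ hZ₀
  set t : ℕ → ℝ := fun n => ((n : ℝ) * c)⁻¹ with htdef
  -- t tends to 0 from the right
  have ht0 : Filter.Tendsto t Filter.atTop (nhdsWithin 0 (Set.Ioi 0)) := by
    rw [tendsto_nhdsWithin_iff]
    constructor
    · exact (tendsto_natCast_atTop_atTop.atTop_mul_const hc).inv_tendsto_atTop
    · filter_upwards [Filter.eventually_ge_atTop 1] with n hn
      have : (0 : ℝ) < (n : ℝ) := by exact_mod_cast Nat.lt_of_lt_of_le Nat.zero_lt_one hn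
      exact Set.mem_Ioi.2 (inv_pos.2 (mul_pos this hc))
  set gX : ℕ → ℝ := fun n => (I (D + t n • QX) - I D) / t n with hgXdef
  set gY : ℕ → ℝ := fun n => (I (D + t n • QY) - I D) / t n with hgYdef
  have hgX : Filter.Tendsto gX Filter.atTop (nhds (J QX)) := (hderiv QX hQX).comp ht0
  have hgY : Filter.Tendsto gY Filter.atTop (nhds (J QY)) := (hderiv QY hQY).comp ht0
  have htz : Filter.Tendsto t Filter.atTop (nhds 0) := ht0.mono_right nhdsWithin_le_nhds
  -- key computation for V at a shifted population
  have key : ∀ (W : ℝ →₀ ℕ), W ≠ 0 → ∀ n : ℕ, 1 ≤ n →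
      V (W + n • Z₀) = ptot W + (n : ℝ) * c * rtot D -
        (I D + t n * ((I (D + t n • toRealPop W) - I D) / t n)) *
          ((psize W : ℝ) + (n : ℝ) * c) := by
    intro W hW n hn
    have hnpos : (0 : ℝ) < (n : ℝ) := by exact_mod_cast Nat.lt_of_lt_of_le Nat.zero_lt_one hn
    have hs : (0 : ℝ) < (n : ℝ) * c := mul_pos hnpos hc
    have htn : t n = ((n : ℝ) * c)⁻¹ := rfl
    have htnpos : 0 < t n := by rw [htn]; exact inv_pos.2 hs
    have hts : t n * ((n : ℝ) * c) = 1 := by rw [htn]; field_simp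
    -- decompose the scaled population
    have h1 : toRealPop (W + n • Z₀) = ((n : ℝ) * c) • (D + t n • toRealPop W) := by
      rw [toRealPop_add, toRealPop_nsmul, hZ₀D, smul_add, smul_smul, smul_smul,
        mul_comm ((n : ℝ) * c) (t n), hts, one_smul]
      abel
    have hreal : IsRealPop (D + t n • toRealPop W) := by
      constructor
      · apply rsize_ne_zero
        rw [rsize_add, rsize_smul, hDsize, rsize_toReal]
        have : 0 ≤ t n * (psize W : ℝ) := mul_nonneg htnpos.le (Nat.cast_nonneg _)
        linarith
      · intro w
        have := hD.2 w
        have h2 : 0 ≤ (t n • toRealPop W) w := by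
          rw [Finsupp.smul_apply, toRealPop_apply]
          exact mul_nonneg htnpos.le (Nat.cast_nonneg _)
        rw [Finsupp.add_apply]
        linarith
    have hI : I (toRealPop (W + n • Z₀)) = I (D + t n • toRealPop W) := by
      rw [h1, hIscale _ hs _ hreal]
    have hI2 : I (D + t n • toRealPop W) =
        I D + t n * ((I (D + t n • toRealPop W) - I D) / t n) := by
      field_simp
      ring
    have hsize : (psize (W + n • Z₀) : ℝ) = (psize W : ℝ) + (n : ℝ) * c := by
      rw [← rsize_toReal, toRealPop_add, toRealPop_nsmul, hZ₀D, rsize_add, rsize_smul,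
        rsize_smul, hDsize, rsize_toReal]
      ring
    have htot : ptot (W + n • Z₀) = ptot W + (n : ℝ) * c * rtot D := by
      rw [← rtot_toReal, toRealPop_add, toRealPop_nsmul, hZ₀D, rtot_add, rtot_smul,
        rtot_smul, rtot_toReal]
      ring
    rw [hV, htot, hsize, hI, ← hI2]
  -- the limit value
  set L : ℝ := (ptot X - ptot Y) - I D * ((psize X : ℝ) - (psize Y : ℝ)) - (J QX - J QY)
    with hLdef
  have hLpos : 0 < L := by
    have hXs := fsum_eq J hJadd hJhom (I D) f hf X hX
    have hYs := fsum_eq J hJadd hJhom (I D) f hf Y hY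
    rw [hXs, hYs, ← hQXdef, ← hQYdef] at hfsum
    rw [hLdef]
    linarith
  -- the sequence of interest
  have hF : Filter.Tendsto (fun n : ℕ => V (X + n • Z₀) - V (Y + n • Z₀)) Filter.atTop (nhds L) := by
    have hφ : Filter.Tendsto
        (fun n : ℕ => (ptot X - ptot Y) - I D * ((psize X : ℝ) - (psize Y : ℝ))
          - (gX n - gY n) - t n * ((psize X : ℝ) * gX n - (psize Y : ℝ) * gY n))
        Filter.atTop (nhds ((ptot X - ptot Y) - I D * ((psize X : ℝ) - (psize Y : ℝ))
          - (J QX - J QY) - 0 * ((psize X : ℝ) * J QX - (psize Y : ℝ) * J QY))) := by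
      exact ((tendsto_const_nhds.sub (hgX.sub hgY)).sub
        (htz.mul (((tendsto_const_nhds.mul hgX)).sub ((tendsto_const_nhds.mul hgY)))))
    have hφ' : ((ptot X - ptot Y) - I D * ((psize X : ℝ) - (psize Y : ℝ))
        - (J QX - J QY) - 0 * ((psize X : ℝ) * J QX - (psize Y : ℝ) * J QY)) = L := by
      rw [hLdef]; ring
    rw [hφ'] at hφ
    apply hφ.congr'
    filter_upwards [Filter.eventually_ge_atTop 1] with n hn
    have h1 := key X hX n hn
    have h2 := key Y hY n hn
    have hnpos : (0 : ℝ) < (n : ℝ) := by exact_mod_cast Nat.lt_of_lt_of_le Nat.zero_lt_one hn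
    have hts : t n * ((n : ℝ) * c) = 1 := by
      rw [htdef]; field_simp
    have egX : (I (D + t n • QX) - I D) / t n = gX n := rfl
    have egY : (I (D + t n • QY) - I D) / t n = gY n := rfl
    rw [h1, h2, ← hQXdef, ← hQYdef, egX, egY]
    linear_combination (gX n - gY n) * hts
  have := hF.eventually (eventually_gt_nhds hLpos)
  rw [Filter.eventually_atTop] at this
  obtain ⟨N, hN⟩ := this
  exact ⟨N, fun n hn => sub_pos.1 (hN n hn)⟩
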